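/- arXiv:1610.06455 — 2 statements merged into one kernel-verified Lean document; each statement's English description precedes it below -/
import Mathlib

section
/- Define $\theta_\varphi=\min\{s\in[0,1]:\varphi\in\mathbf{H}_{\alpha,\beta,V}(s)\}$ for $\varphi\in\mathbf{H}_{\alpha,\beta,V}(1)$. If $\varphi_n,\varphi\in\mathbf{H}_{\alpha,\beta,V}(1)$ and $\sup_{\nu\in S^{d-1}}|\varphi_n(\nu)-\varphi(\nu)|\to0$, then $\theta_{\varphi_n}\to\theta_\varphi$. -/
open Finset

/-- The dot product of `ν ∈ ℝ^d` with an integer vector `ξ ∈ ℤ^d`. -/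
noncomputable def dotZ {d : ℕ} (ν : Fin d → ℝ) (ξ : Fin d → ℤ) : ℝ :=
  ∑ k, ν k * (ξ k : ℝ)

/-- The class `H_{α,β,V}(θ)` via its characterization by optimal bounds. -/
def memH {d : ℕ} (V : Finset (Fin d → ℤ)) (α β : (Fin d → ℤ) → ℝ) (θ : ℝ)
    (φ : (Fin d → ℝ) → ℝ) : Prop :=
  (∀ ν, φ (-ν) = φ ν) ∧ ConvexOn ℝ Set.univ φ ∧
    (∀ t : ℝ, 0 ≤ t → ∀ ν, φ (t • ν) = t * φ ν) ∧
    ∃ θξ : (Fin d → ℤ) → ℝ, (∀ ξ ∈ V, θξ ξ ∈ Set.Icc (0:ℝ) 1) ∧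
      (∑ ξ ∈ V, θξ ξ) / (V.card : ℝ) = θ ∧
      ∀ ν, (∑ ξ ∈ V, α ξ * |dotZ ν ξ|) ≤ φ ν ∧
        φ ν ≤ ∑ ξ ∈ V, (θξ ξ * β ξ + (1 - θξ ξ) * α ξ) * |dotZ ν ξ|

/-- The minimal volume fraction `θ_φ = min { s ∈ [0,1] : φ ∈ H_{α,β,V}(s) }`. -/
noncomputable def thetaMin {d : ℕ} (V : Finset (Fin d → ℤ))
    (α β : (Fin d → ℤ) → ℝ) (φ : (Fin d → ℝ) → ℝ) : ℝ :=
  sInf {s : ℝ | s ∈ Set.Icc (0:ℝ) 1 ∧ memH V α β s φ}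

open RealInnerProductSpace


section Cone2
variable {F : Type*} [NormedAddCommGroup F] [InnerProductSpace ℝ F] [FiniteDimensional ℝ F]
variable {ι : Type*} [DecidableEq ι]
set_option linter.unusedSectionVars false





/-- Conic Carathéodory: a nonnegative combination can be rewritten as a nonnegative
combination over a linearly independent subfamily. -/
lemma cone_caratheodory (a : ι → F) :
    ∀ (n : ℕ) (A : Finset ι), A.card ≤ n → ∀ (lam : ι → ℝ), (∀ i ∈ A, 0 ≤ lam i) →
    ∃ (J : Finset ι) (mu : ι → ℝ), J ⊆ A ∧
      LinearIndependent ℝ (fun j : J => a j) ∧ (∀ i, 0 ≤ mu i) ∧ (∀ i, i ∉ J → mu i = 0) ∧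
      ∑ i ∈ J, mu i • a i = ∑ i ∈ A, lam i • a i := by
  intro n
  induction n with
  | zero =>
    intro A hA lam _
    have : A = ∅ := Finset.card_eq_zero.1 (Nat.le_zero.1 hA)
    subst this
    refine ⟨∅, fun _ => 0, subset_rfl, ?_, fun _ => le_rfl, fun _ _ => rfl, by simp⟩
    exact linearIndependent_empty_type
  | succ n ih =>
    intro A hA lam hlam
    by_cases hli : LinearIndependent ℝ (fun j : A => a j)
    · refine ⟨A, fun i => if i ∈ A then lam i else 0, subset_rfl, hli, ?_, ?_, ?_⟩
      · intro i
        by_cases h : i ∈ A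
        · simpa [h] using hlam i h
        · simp [h]
      · intro i hi; simp [hi]
      · exact Finset.sum_congr rfl fun i hi => by simp [hi]
    · -- get a nontrivial relation
      obtain ⟨g, hg0, j₀, hgj₀⟩ := Fintype.not_linearIndependent_iff.1 hli
      -- extend g to ι
      set c : ι → ℝ := fun i => if h : i ∈ A then g ⟨i, h⟩ else 0 with hc
      have hcsum : ∑ i ∈ A, c i • a i = 0 := by
        rw [← hg0, ← Finset.sum_attach A (fun i => c i • a i)]
        exact Finset.sum_congr rfl fun j _ => by simp [hc, j.2]
      have hcex : ∃ cc : ι → ℝ, (∑ i ∈ A, cc i • a i = 0) ∧ (∀ i, i ∉ A → cc i = 0) ∧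
          ∃ i ∈ A, 0 < cc i := by
        rcases lt_or_gt_of_ne hgj₀ with h | h
        · refine ⟨-c, by simp [hcsum], fun i hi => by simp [hc, hi], j₀.1, j₀.2, ?_⟩
          simp only [Pi.neg_apply, hc, dif_pos j₀.2]
          simpa using h
        · refine ⟨c, hcsum, fun i hi => by simp [hc, hi], j₀.1, j₀.2, ?_⟩
          simp only [hc, dif_pos j₀.2]
          simpa using h
      obtain ⟨cc, hccsum, hccsupp, hccpos⟩ := hcex
      set T : Finset ι := A.filter (fun i => 0 < cc i) with hT
      have hTne : T.Nonempty := by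
        obtain ⟨i, hiA, hi⟩ := hccpos
        exact ⟨i, Finset.mem_filter.2 ⟨hiA, hi⟩⟩
      set t : ℝ := T.inf' hTne (fun i => lam i / cc i) with ht
      obtain ⟨i₀, hi₀T, hi₀⟩ := Finset.exists_mem_eq_inf' hTne (fun i => lam i / cc i)
      have hi₀A : i₀ ∈ A := (Finset.mem_filter.1 hi₀T).1
      have hci₀ : 0 < cc i₀ := (Finset.mem_filter.1 hi₀T).2
      have htnn : 0 ≤ t := by
        rw [ht]
        apply Finset.le_inf'
        intro b hb
        have := (Finset.mem_filter.1 hb).2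
        exact div_nonneg (hlam b (Finset.mem_filter.1 hb).1) this.le
      set lam' : ι → ℝ := fun i => lam i - t * cc i with hlam'
      have hlam'nn : ∀ i ∈ A, 0 ≤ lam' i := by
        intro i hiA
        by_cases hci : 0 < cc i
        · have : t ≤ lam i / cc i := Finset.inf'_le _ (Finset.mem_filter.2 ⟨hiA, hci⟩)
          have := (le_div_iff₀ hci).1 this
          simp only [hlam']; linarith
        · push_neg at hci
          have : t * cc i ≤ 0 := mul_nonpos_of_nonneg_of_nonpos htnn hci
          have := hlam i hiA
          simp only [hlam']; linarith
      have hlam'i₀ : lam' i₀ = 0 := by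
        have hne : cc i₀ ≠ 0 := ne_of_gt hci₀
        have : lam i₀ / cc i₀ * cc i₀ = lam i₀ := div_mul_cancel₀ _ hne
        show lam i₀ - t * cc i₀ = 0
        rw [ht, hi₀]
        linarith
      have hsum' : ∑ i ∈ A.erase i₀, lam' i • a i = ∑ i ∈ A, lam i • a i := by
        rw [Finset.sum_erase _ (by rw [hlam'i₀, zero_smul])]
        have : ∑ i ∈ A, lam' i • a i
            = ∑ i ∈ A, lam i • a i - t • ∑ i ∈ A, cc i • a i := by
          rw [Finset.smul_sum, ← Finset.sum_sub_distrib]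
          exact Finset.sum_congr rfl fun i _ => by
            simp [hlam', sub_smul, smul_smul]
        rw [this, hccsum, smul_zero, sub_zero]
      have hcard : (A.erase i₀).card ≤ n := by
        have := Finset.card_erase_of_mem hi₀A
        omega
      obtain ⟨J, mu, hJsub, hJli, hmunn, hmusupp, hmusum⟩ :=
        ih (A.erase i₀) hcard lam' (fun i hi => hlam'nn i (Finset.mem_of_mem_erase hi))
      exact ⟨J, mu, hJsub.trans (Finset.erase_subset _ _), hJli, hmunn, hmusupp,
        by rw [hmusum, hsum']⟩



/-- Coefficients in a linearly independent combination are bounded by the norm of the sum,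
with a constant uniform over all subfamilies of a fixed finite family. -/
lemma exists_uniform_coeff_bound (a : ι → F) (A : Finset ι) :
    ∃ C : ℝ, 0 < C ∧ ∀ J : Finset ι, J ⊆ A → LinearIndependent ℝ (fun j : J => a j) →
      ∀ mu : ι → ℝ, (∀ i, i ∉ J → mu i = 0) →
      ∀ i ∈ J, |mu i| ≤ C * ‖∑ i ∈ J, mu i • a i‖ := by
  have hper : ∀ J : Finset ι, ∃ C : ℝ, 0 < C ∧ (LinearIndependent ℝ (fun j : J => a j) →
      ∀ mu : ι → ℝ, (∀ i, i ∉ J → mu i = 0) →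
      ∀ i ∈ J, |mu i| ≤ C * ‖∑ i ∈ J, mu i • a i‖) := by
    intro J
    by_cases hli : LinearIndependent ℝ (fun j : J => a j)
    · -- build the linear map
      set T : (J → ℝ) →ₗ[ℝ] F :=
        { toFun := fun mu => ∑ j : J, mu j • a j
          map_add' := by intro x y; simp [add_smul, Finset.sum_add_distrib]
          map_smul' := by intro c x; simp [smul_smul, Finset.smul_sum] } with hT
      have hker : LinearMap.ker T = ⊥ := by
        rw [LinearMap.ker_eq_bot']
        intro m hm
        have := Fintype.linearIndependent_iff.1 hli m hm
        funext j; exact this j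
      obtain ⟨K, hK, hanti⟩ := T.exists_antilipschitzWith hker
      refine ⟨K + 1, by positivity, fun _ mu hmu i hiJ => ?_⟩
      have h1 : ∑ i ∈ J, mu i • a i = T (fun j : J => mu j) := by
        simp only [hT, LinearMap.coe_mk, AddHom.coe_mk]
        exact (Finset.sum_coe_sort J (fun i => mu i • a i)).symm
      have h2 : ‖(fun j : J => mu j)‖ ≤ K * ‖T (fun j : J => mu j)‖ := by
        have := hanti.le_mul_dist (fun j : J => mu j) 0
        simpa [dist_zero_right, map_zero] using this
      have h3 : |mu i| ≤ ‖(fun j : J => mu j)‖ := by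
        have := norm_le_pi_norm (fun j : J => mu j) ⟨i, hiJ⟩
        simpa using this
      rw [h1]
      calc |mu i| ≤ K * ‖T (fun j : J => mu j)‖ := h3.trans h2
        _ ≤ (K + 1) * ‖T (fun j : J => mu j)‖ := by
            have : (0:ℝ) ≤ ‖T (fun j : J => mu j)‖ := norm_nonneg _
            nlinarith
    · exact ⟨1, one_pos, fun h => absurd h hli⟩
  choose Cf hCf0 hCf using hper
  classical
  have hne : (A.powerset.image Cf).Nonempty :=
    ⟨Cf ∅, Finset.mem_image_of_mem _ (Finset.empty_mem_powerset _)⟩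
  set M : ℝ := (A.powerset.image Cf).max' hne with hM
  refine ⟨M + 1, ?_, ?_⟩
  · have h1 : Cf ∅ ≤ M := Finset.le_max' _ _ (Finset.mem_image_of_mem Cf
      (Finset.empty_mem_powerset _))
    have := hCf0 ∅
    linarith
  · intro J hJA hli mu hmu i hiJ
    have hle : Cf J ≤ M :=
      Finset.le_max' _ _ (Finset.mem_image_of_mem Cf (Finset.mem_powerset.2 hJA))
    calc |mu i| ≤ Cf J * ‖∑ i ∈ J, mu i • a i‖ := hCf J hli mu hmu i hiJ
      _ ≤ (M + 1) * ‖∑ i ∈ J, mu i • a i‖ := by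
          have : (0:ℝ) ≤ ‖∑ i ∈ J, mu i • a i‖ := norm_nonneg _
          nlinarith

/-- The finitely generated cone as a set. -/
def coneOf (a : ι → F) (A : Finset ι) : Set F :=
  {x | ∃ lam : ι → ℝ, (∀ i, 0 ≤ lam i) ∧ (∀ i, i ∉ A → lam i = 0) ∧ x = ∑ i ∈ A, lam i • a i}

lemma coneOf_zero_mem (a : ι → F) (A : Finset ι) : (0:F) ∈ coneOf a A :=
  ⟨fun _ => 0, fun _ => le_rfl, fun _ _ => rfl, by simp⟩

lemma coneOf_convex (a : ι → F) (A : Finset ι) : Convex ℝ (coneOf a A) := by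
  rintro x ⟨lx, hlx0, hlxs, rfl⟩ y ⟨ly, hly0, hlys, rfl⟩ p q hp hq hpq
  refine ⟨fun i => p * lx i + q * ly i, fun i => add_nonneg (mul_nonneg hp (hlx0 i)) (mul_nonneg hq (hly0 i)), fun i hi => by
    simp [hlxs i hi, hlys i hi], ?_⟩
  rw [Finset.smul_sum, Finset.smul_sum, ← Finset.sum_add_distrib]
  exact Finset.sum_congr rfl fun i _ => by
    simp [add_smul, smul_smul]

lemma coneOf_isClosed (a : ι → F) (A : Finset ι) : IsClosed (coneOf a A) := by
  classical
  set Js : Finset (Finset ι) :=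
    A.powerset.filter (fun J => LinearIndependent ℝ (fun j : (J : Finset ι) => a j)) with hJs
  -- coneOf = union over independent subsets J of images of the nonneg orthant
  have hrep : coneOf a A = ⋃ J ∈ Js,
      (fun mu : {x // x ∈ J} → ℝ => ∑ j : {x // x ∈ J}, mu j • a (j:ι)) ''
        {mu | ∀ j, 0 ≤ mu j} := by
    ext x
    simp only [hJs, Set.mem_iUnion, Set.mem_image, Set.mem_setOf_eq, Finset.mem_filter,
      Finset.mem_powerset, exists_prop]
    constructor
    · rintro ⟨lam, hl0, hls, rfl⟩
      obtain ⟨J, mu, hJA, hli, hmu0, hmus, hsum⟩ :=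
        cone_caratheodory a A.card A le_rfl lam (fun i _ => hl0 i)
      refine ⟨J, ⟨hJA, hli⟩, fun j : {x // x ∈ J} => mu (j : ι), fun j => hmu0 (j : ι), ?_⟩
      rw [← hsum]
      exact Finset.sum_coe_sort J (fun i => mu i • a i)
    · rintro ⟨J, ⟨hJA, _⟩, mu, hmu0, rfl⟩
      refine ⟨fun i => if h : i ∈ J then mu ⟨i, h⟩ else 0, fun i => ?_, fun i hi => ?_, ?_⟩
      · by_cases h : i ∈ J
        · simpa [h] using hmu0 ⟨i, h⟩
        · simp [h]
      · exact dif_neg (fun h => hi (hJA h))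
      · have h1 : ∑ j : J, mu j • a (j:ι)
            = ∑ i ∈ J, (if h : i ∈ J then mu ⟨i, h⟩ else 0) • a i := by
          rw [← Finset.sum_coe_sort J
            (fun i => (if h : i ∈ J then mu ⟨i, h⟩ else 0) • a i)]
          exact Finset.sum_congr rfl fun j _ => by simp [j.2]
        have h2 : ∑ i ∈ J, (if h : i ∈ J then mu ⟨i, h⟩ else 0) • a i
            = ∑ i ∈ A, (if h : i ∈ J then mu ⟨i, h⟩ else 0) • a i :=
          Finset.sum_subset hJA (fun i _ hiJ => by simp [hiJ])
        rw [h1, h2]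
  rw [hrep]
  apply Set.Finite.isClosed_biUnion (Finset.finite_toSet _)
  intro J hJ
  have hli : LinearIndependent ℝ (fun j : J => a j) := by
    simpa using (Finset.mem_filter.1 hJ).2
  set T : ({x // x ∈ J} → ℝ) →ₗ[ℝ] F :=
    { toFun := fun mu => ∑ j : {x // x ∈ J}, mu j • a (j:ι)
      map_add' := by intro x y; simp [add_smul, Finset.sum_add_distrib]
      map_smul' := by intro c x; simp [smul_smul, Finset.smul_sum] } with hT
  have hker : LinearMap.ker T = ⊥ := by
    rw [LinearMap.ker_eq_bot']
    intro m hm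
    have := Fintype.linearIndependent_iff.1 hli m hm
    funext j; exact this j
  obtain ⟨K, hK, hanti⟩ := T.exists_antilipschitzWith hker
  have hcont : UniformContinuous T := by
    have : Continuous T := T.continuous_of_finiteDimensional
    exact (LinearMap.toContinuousLinearMap T).uniformContinuous
  have hclosed : IsClosed {mu : {x // x ∈ J} → ℝ | ∀ j, 0 ≤ mu j} := by
    have : {mu : {x // x ∈ J} → ℝ | ∀ j, 0 ≤ mu j} = ⋂ j, {mu | 0 ≤ mu j} := by
      ext mu; simp
    rw [this]
    exact isClosed_iInter fun j => isClosed_le continuous_const (continuous_apply j)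
  exact (hanti.isClosedEmbedding hcont).isClosedMap _ hclosed


lemma abs_split_aux {x c : ℝ} (h1 : x ≤ max 0 c) (h2 : -x ≤ max 0 (-c)) :
    |x| + |c - x| = |c| := by
  rcases le_total 0 c with h | h
  · rw [max_eq_right h] at h1
    rw [max_eq_left (neg_nonpos.2 h)] at h2
    rw [abs_of_nonneg (by linarith), abs_of_nonneg (by linarith), abs_of_nonneg h]; ring
  · rw [max_eq_left h] at h1
    rw [max_eq_right (neg_nonneg.2 h)] at h2
    rw [abs_of_nonpos (by linarith), abs_of_nonpos (by linarith), abs_of_nonpos h]; ring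

/-- Farkas lemma: if `⟪v, z⟫ ≤ 0` whenever `⟪a i, z⟫ ≤ 0` for all `i ∈ A`,
then `v` is a nonnegative combination of the `a i`, `i ∈ A`. -/
lemma farkas_cone (a : ι → F) (A : Finset ι) (v : F)
    (hv : ∀ z : F, (∀ i ∈ A, ⟪a i, z⟫ ≤ 0) → ⟪v, z⟫ ≤ 0) :
    v ∈ coneOf a A := by
  by_contra hvc
  obtain ⟨f, u, hfu, hufv⟩ :=
    geometric_hahn_banach_closed_point (coneOf_convex a A) (coneOf_isClosed a A) hvc
  have hu0 : 0 < u := by simpa using hfu 0 (coneOf_zero_mem a A)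
  have hfa : ∀ i ∈ A, f (a i) ≤ 0 := by
    intro i hiA
    by_contra hpos
    push_neg at hpos
    have hmem : ((u + 1) / f (a i)) • a i ∈ coneOf a A := by
      refine ⟨fun k => if k = i then (u + 1) / f (a i) else 0, fun k => ?_, fun k hk => ?_, ?_⟩
      · by_cases h : k = i
        · simp only [h, if_pos rfl]
          positivity
        · simp [h]
      · exact if_neg (fun h : k = i => hk (h ▸ hiA))
      · rw [Finset.sum_eq_single i (fun k _ hk => by simp [hk]) (fun h => absurd hiA h)]
        simp
    have := hfu _ hmem
    rw [map_smul] at this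
    have hne : f (a i) ≠ 0 := ne_of_gt hpos
    simp only [smul_eq_mul] at this
    rw [div_mul_cancel₀ _ hne] at this
    linarith
  set w : F := (InnerProductSpace.toDual ℝ F).symm f with hw
  have hwx : ∀ x : F, ⟪w, x⟫ = f x := fun x => InnerProductSpace.toDual_symm_apply
  have h1 : ⟪v, w⟫ ≤ 0 := by
    apply hv
    intro i hiA
    rw [real_inner_comm, hwx]
    exact hfa i hiA
  rw [real_inner_comm, hwx] at h1
  linarith

/-- The Hoffman-type decomposition lemma. -/
lemma key_decomp (a : ι → F) (P S : Finset ι) :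
    ∃ C : ℝ, 0 < C ∧ ∀ ν : F, ∃ y : F,
      (∀ i ∈ P, ⟪y, a i⟫ = 0) ∧
      (∀ i ∈ S, |⟪y, a i⟫| + |⟪ν - y, a i⟫| = |⟪ν, a i⟫|) ∧
      ‖ν - y‖ ≤ C * ∑ i ∈ P, |⟪ν, a i⟫| := by
  classical
  set e : ι × Bool → F := fun p => if p.2 then a p.1 else -(a p.1) with he
  set A0 : Finset (ι × Bool) := (P ∪ S) ×ˢ Finset.univ with hA0
  obtain ⟨C₀, hC₀, hbound⟩ := exists_uniform_coeff_bound e A0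
  refine ⟨2 * C₀ + 1, by positivity, fun ν => ?_⟩
  have hg0 : 0 ≤ ∑ i ∈ P, |⟪ν, a i⟫| := Finset.sum_nonneg fun i _ => abs_nonneg _
  set bnd : ι × Bool → ℝ := fun p => if p.1 ∈ P then 0 else max 0 ⟪ν, e p⟫ with hbnd
  have hbnd0 : ∀ p, 0 ≤ bnd p := by
    intro p; by_cases h : p.1 ∈ P <;> simp [hbnd, h, le_max_left]
  set K : Set F := {y | ∀ p ∈ A0, ⟪y, e p⟫ ≤ bnd p} with hK
  have h0K : (0:F) ∈ K := fun p _ => by simpa using hbnd0 p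
  have hKconv : Convex ℝ K := by
    rintro y1 hy1 y2 hy2 p q hp hq hpq
    intro c hc
    have e1 := hy1 c hc
    have e2 := hy2 c hc
    calc ⟪p • y1 + q • y2, e c⟫ = p * ⟪y1, e c⟫ + q * ⟪y2, e c⟫ := by
          rw [inner_add_left, real_inner_smul_left, real_inner_smul_left]
      _ ≤ p * bnd c + q * bnd c :=
          add_le_add (mul_le_mul_of_nonneg_left e1 hp) (mul_le_mul_of_nonneg_left e2 hq)
      _ = bnd c := by rw [← add_mul, hpq, one_mul]
  have hKclosed : IsClosed K := by
    have : K = ⋂ (p : ι × Bool) (_ : p ∈ A0), {y : F | ⟪y, e p⟫ ≤ bnd p} := by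
      ext y; simp [hK]
    rw [this]
    exact isClosed_iInter fun p => isClosed_iInter fun _ =>
      isClosed_le (Continuous.inner continuous_id continuous_const) continuous_const
  obtain ⟨y, hyK, hproj⟩ :=
    exists_norm_eq_iInf_of_complete_convex ⟨0, h0K⟩ (hKclosed.isComplete) hKconv ν
  have hvar : ∀ z ∈ K, ⟪ν - y, z - y⟫ ≤ 0 :=
    (norm_eq_iInf_iff_real_inner_le_zero hKconv hyK).1 hproj
  have hyP : ∀ i ∈ P, ⟪y, a i⟫ = 0 := by
    intro i hiP
    have h1 := hyK (i, true) (by simp [hA0, Finset.mem_union, hiP])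
    have h2 := hyK (i, false) (by simp [hA0, Finset.mem_union, hiP])
    simp only [he, hbnd, if_pos hiP, if_pos rfl] at h1
    simp only [he, hbnd, if_pos hiP, if_neg (Bool.false_ne_true)] at h2
    rw [inner_neg_right] at h2
    linarith
  refine ⟨y, hyP, ?_, ?_⟩
  · intro i hiS
    by_cases hiP : i ∈ P
    · rw [hyP i hiP, inner_sub_left, hyP i hiP]
      simp
    · have h1 := hyK (i, true) (by simp [hA0, Finset.mem_union, hiS])
      have h2 := hyK (i, false) (by simp [hA0, Finset.mem_union, hiS])
      simp only [he, hbnd, if_neg hiP, if_pos rfl, if_neg (Bool.false_ne_true)] at h1 h2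
      rw [inner_neg_right, inner_neg_right] at h2
      rw [inner_sub_left]
      exact abs_split_aux h1 h2
  · -- the norm bound
    set v : F := ν - y with hv
    by_cases hv0 : ‖v‖ = 0
    · rw [hv0]; positivity
    have hvpos : 0 < ‖v‖ := lt_of_le_of_ne (norm_nonneg _) (Ne.symm hv0)
    set Act : Finset (ι × Bool) := A0.filter (fun p => ⟪y, e p⟫ = bnd p) with hAct
    have hfark : v ∈ coneOf e Act := by
      apply farkas_cone
      intro z hz
      -- find a small positive step
      set In : Finset (ι × Bool) := A0.filter (fun p => ⟪y, e p⟫ ≠ bnd p) with hIn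
      have hslack : ∀ p ∈ In, 0 < bnd p - ⟪y, e p⟫ := by
        intro p hp
        have h1 := hyK p (Finset.mem_filter.1 hp).1
        have h2 := (Finset.mem_filter.1 hp).2
        exact sub_pos.2 (lt_of_le_of_ne h1 h2)
      set t : ℝ := if h : In.Nonempty
        then min 1 (In.inf' h (fun p => (bnd p - ⟪y, e p⟫) / (|⟪e p, z⟫| + 1)))
        else 1 with htdef
      have ht0 : 0 < t := by
        rw [htdef]
        split
        · rename_i h
          apply lt_min one_pos
          rw [Finset.lt_inf'_iff]
          intro p hp
          exact div_pos (hslack p hp) (by positivity)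
        · exact one_pos
      have hmemK : y + t • z ∈ K := by
        intro p hpA0
        rw [inner_add_left, real_inner_smul_left]
        by_cases hact : ⟪y, e p⟫ = bnd p
        · have hez : ⟪e p, z⟫ ≤ 0 := hz p (Finset.mem_filter.2 ⟨hpA0, hact⟩)
          rw [real_inner_comm] at hez
          nlinarith
        · have hpIn : p ∈ In := Finset.mem_filter.2 ⟨hpA0, hact⟩
          have hne : In.Nonempty := ⟨p, hpIn⟩
          have htle : t ≤ (bnd p - ⟪y, e p⟫) / (|⟪e p, z⟫| + 1) := by
            rw [htdef, dif_pos hne]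
            exact le_trans (min_le_right _ _) (Finset.inf'_le _ hpIn)
          have habs : ⟪z, e p⟫ ≤ |⟪e p, z⟫| := by
            rw [real_inner_comm]
            exact le_abs_self _
          have h3 : t * ⟪z, e p⟫ ≤ t * |⟪e p, z⟫| :=
            mul_le_mul_of_nonneg_left habs ht0.le
          have h4 : t * |⟪e p, z⟫| ≤ bnd p - ⟪y, e p⟫ := by
            have h5 : t * (|⟪e p, z⟫| + 1) ≤ bnd p - ⟪y, e p⟫ := by
              rw [← div_mul_cancel₀ (bnd p - ⟪y, e p⟫) (show (|⟪e p, z⟫| + 1) ≠ 0 by positivity)]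
              exact mul_le_mul_of_nonneg_right htle (by positivity)
            nlinarith [abs_nonneg (⟪e p, z⟫)]
          linarith
      have := hvar _ hmemK
      rw [add_sub_cancel_left, real_inner_smul_right] at this
      nlinarith
    obtain ⟨lam, hlam0, hlamsupp, hlamsum⟩ := hfark
    obtain ⟨J, mu, hJAct, hJli, hmu0, hmusupp, hmusum⟩ :=
      cone_caratheodory e Act.card Act le_rfl lam (fun i _ => hlam0 i)
    rw [← hlamsum] at hmusum
    have hJA0 : J ⊆ A0 := hJAct.trans (Finset.filter_subset _ _)
    have hmub : ∀ p ∈ J, mu p ≤ C₀ * ‖v‖ := by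
      intro p hpJ
      have := hbound J hJA0 hJli mu hmusupp p hpJ
      rw [hmusum] at this
      exact (le_abs_self _).trans this
    -- ‖v‖² = ∑_{p ∈ J} mu p * ⟪e p, v⟫
    have hnormsq : ‖v‖ ^ 2 = ∑ p ∈ J, mu p * ⟪e p, v⟫ := by
      rw [← real_inner_self_eq_norm_sq]
      nth_rewrite 1 [← hmusum]
      rw [sum_inner]
      exact Finset.sum_congr rfl fun p _ => real_inner_smul_left _ _ _
    set wgt : ι × Bool → ℝ := fun p => if p.1 ∈ P then |⟪ν, a p.1⟫| else 0 with hwgt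
    have hwgt0 : ∀ p, 0 ≤ wgt p := by
      intro p; by_cases h : p.1 ∈ P <;> simp [hwgt, h, abs_nonneg]
    have hviol : ∀ p ∈ J, ⟪e p, v⟫ ≤ wgt p := by
      intro p hpJ
      have hact : ⟪y, e p⟫ = bnd p := (Finset.mem_filter.1 (hJAct hpJ)).2
      have : ⟪e p, v⟫ = ⟪e p, ν⟫ - bnd p := by
        rw [hv, inner_sub_right, ← hact, real_inner_comm y]
      rw [this]
      by_cases hp : p.1 ∈ P
      · simp only [hwgt, if_pos hp, hbnd, if_pos hp, sub_zero]
        rcases Bool.dichotomy p.2 with h | h <;>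
          simp only [he, h, if_pos, if_neg Bool.false_ne_true, inner_neg_left] <;>
          · rw [real_inner_comm]
            first
              | exact (neg_le_abs _).trans (le_refl _) 
              | exact le_abs_self _
      · simp only [hwgt, if_neg hp, hbnd, if_neg hp]
        have : ⟪e p, ν⟫ ≤ max 0 ⟪ν, e p⟫ := by
          rw [real_inner_comm]
          exact le_max_right _ _
        linarith
    have hfinal : ‖v‖ ^ 2 ≤ C₀ * ‖v‖ * ∑ p ∈ A0, wgt p := by
      rw [hnormsq]
      calc ∑ p ∈ J, mu p * ⟪e p, v⟫ ≤ ∑ p ∈ J, (C₀ * ‖v‖) * wgt p := by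
            apply Finset.sum_le_sum
            intro p hpJ
            calc mu p * ⟪e p, v⟫ ≤ mu p * wgt p :=
                  mul_le_mul_of_nonneg_left (hviol p hpJ) (hmu0 p)
              _ ≤ (C₀ * ‖v‖) * wgt p :=
                  mul_le_mul_of_nonneg_right (hmub p hpJ) (hwgt0 p)
        _ = (C₀ * ‖v‖) * ∑ p ∈ J, wgt p := by rw [Finset.mul_sum]
        _ ≤ (C₀ * ‖v‖) * ∑ p ∈ A0, wgt p := by
            apply mul_le_mul_of_nonneg_left _ (by positivity)
            exact Finset.sum_le_sum_of_subset_of_nonneg hJA0 (fun p _ _ => hwgt0 p)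
        _ = C₀ * ‖v‖ * ∑ p ∈ A0, wgt p := by ring
    have hsumA0 : ∑ p ∈ A0, wgt p = 2 * ∑ i ∈ P, |⟪ν, a i⟫| := by
      rw [hA0, Finset.sum_product]
      have : ∀ i ∈ P ∪ S, ∑ b : Bool, wgt (i, b)
          = if i ∈ P then 2 * |⟪ν, a i⟫| else 0 := by
        intro i _
        by_cases h : i ∈ P <;> simp [hwgt, h] <;> try ring
      rw [Finset.sum_congr rfl this, Finset.sum_ite, Finset.sum_const_zero, add_zero,
        ← Finset.mul_sum]
      congr 1
      apply Finset.sum_congr _ (fun _ _ => rfl)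
      ext i
      simp only [Finset.mem_filter, Finset.mem_union]
      exact ⟨fun h => h.2, fun h => ⟨Or.inl h, h⟩⟩
    have h2 : ‖v‖ * ‖v‖ ≤ (2 * C₀ * ∑ i ∈ P, |⟪ν, a i⟫|) * ‖v‖ := by
      have := hfinal
      rw [hsumA0] at this
      nlinarith
    have h3 := le_of_mul_le_mul_right (by linarith : ‖v‖ * ‖v‖ ≤ (2 * C₀ * ∑ i ∈ P, |⟪ν, a i⟫|) * ‖v‖) hvpos
    nlinarith

end Cone2

section MainAux
open Filter
variable {d : ℕ}

noncomputable def vecZ (ξ : Fin d → ℤ) : EuclideanSpace ℝ (Fin d) := WithLp.toLp 2 (fun k => (ξ k : ℝ))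

lemma dotZ_inner (ν : EuclideanSpace ℝ (Fin d)) (ξ : Fin d → ℤ) :
    dotZ ν ξ = ⟪ν, vecZ ξ⟫ := by
  simp [dotZ, vecZ, PiLp.inner_apply, RCLike.inner_apply, conj_trivial]
  exact Finset.sum_congr rfl fun _ _ => mul_comm _ _

lemma sum_sq_eq_normsq (ν : EuclideanSpace ℝ (Fin d)) : ∑ k, (ν k)^2 = ‖ν‖^2 := by
  rw [EuclideanSpace.norm_eq, Real.sq_sqrt (by positivity)]
  simp [Real.norm_eq_abs, sq_abs]

lemma sqrt_sum_sq (ν : EuclideanSpace ℝ (Fin d)) : Real.sqrt (∑ k, (ν k)^2) = ‖ν‖ := by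
  rw [sum_sq_eq_normsq]
  exact Real.sqrt_sq (norm_nonneg _)

lemma dotZ_sub (ν y : Fin d → ℝ) (ξ : Fin d → ℤ) :
    dotZ (ν - y) ξ = dotZ ν ξ - dotZ y ξ := by
  simp only [dotZ, Pi.sub_apply, sub_mul, Finset.sum_sub_distrib]

/-- a 1-homogeneous function vanishes at 0 -/
lemma hom_zero {φ : (Fin d → ℝ) → ℝ}
    (hom : ∀ t : ℝ, 0 ≤ t → ∀ ν, φ (t • ν) = t * φ ν) : φ 0 = 0 := by
  have := hom 0 le_rfl 0
  simpa using this

/-- subadditivity from convexity and homogeneity -/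
lemma hom_subadd {φ : (Fin d → ℝ) → ℝ} (hcvx : ConvexOn ℝ Set.univ φ)
    (hom : ∀ t : ℝ, 0 ≤ t → ∀ ν, φ (t • ν) = t * φ ν) (x y : Fin d → ℝ) :
    φ (x + y) ≤ φ x + φ y := by
  have h1 : x + y = (2:ℝ) • ((1/2 : ℝ) • x + (1/2 : ℝ) • y) := by
    rw [smul_add, smul_smul, smul_smul]
    norm_num
  have h2 := hcvx.2 (Set.mem_univ x) (Set.mem_univ y)
    (by norm_num : (0:ℝ) ≤ 1/2) (by norm_num : (0:ℝ) ≤ 1/2) (by norm_num)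
  have h3 : φ (x + y) = 2 * φ ((1/2 : ℝ) • x + (1/2 : ℝ) • y) := by
    rw [h1]
    exact hom 2 (by norm_num) _
  rw [h3]
  rw [smul_eq_mul, smul_eq_mul] at h2
  linarith [h2]

/-- if the average of the `θξ` over `V` is `1`, each equals `1` on `V`. -/
lemma theta_eq_one {V : Finset (Fin d → ℤ)} (hV : V.Nonempty) {θv : (Fin d → ℤ) → ℝ}
    (hIcc : ∀ ξ ∈ V, θv ξ ∈ Set.Icc (0:ℝ) 1)
    (havg : (∑ ξ ∈ V, θv ξ) / (V.card : ℝ) = 1) :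
    ∀ ξ ∈ V, θv ξ = 1 := by
  have hcard : (0:ℝ) < V.card := by
    exact_mod_cast Finset.card_pos.2 hV
  have hsum : ∑ ξ ∈ V, θv ξ = V.card := by
    field_simp at havg
    linarith [havg]
  have hzero : ∑ ξ ∈ V, (1 - θv ξ) = 0 := by
    rw [Finset.sum_sub_distrib, Finset.sum_const, nsmul_eq_mul, mul_one, hsum, sub_self]
  have := (Finset.sum_eq_zero_iff_of_nonneg
    (fun ξ hξ => by linarith [(hIcc ξ hξ).2])).1 hzero
  intro ξ hξ
  linarith [this ξ hξ]

/-- upper bound with β for members of `H(1)`. -/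
lemma memH_one_upper {V : Finset (Fin d → ℤ)} (hV : V.Nonempty) {α β : (Fin d → ℤ) → ℝ}
    {ψ : (Fin d → ℝ) → ℝ} (hψ : memH V α β 1 ψ) :
    ∀ ν, ψ ν ≤ ∑ ξ ∈ V, β ξ * |dotZ ν ξ| := by
  obtain ⟨_, _, _, θv, hIcc, havg, hb⟩ := hψ
  intro ν
  refine (hb ν).2.trans (le_of_eq ?_)
  apply Finset.sum_congr rfl
  intro ξ hξ
  rw [theta_eq_one hV hIcc havg ξ hξ]
  ring_nf

lemma memH_lower {V : Finset (Fin d → ℤ)} {α β : (Fin d → ℤ) → ℝ} {s : ℝ}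
    {ψ : (Fin d → ℝ) → ℝ} (hψ : memH V α β s ψ) :
    ∀ ν, (∑ ξ ∈ V, α ξ * |dotZ ν ξ|) ≤ ψ ν := by
  obtain ⟨_, _, _, θv, _, _, hb⟩ := hψ
  exact fun ν => (hb ν).1

lemma thetaMin_le {V : Finset (Fin d → ℤ)} {α β : (Fin d → ℤ) → ℝ} {s : ℝ}
    {ψ : (Fin d → ℝ) → ℝ} (hIcc : s ∈ Set.Icc (0:ℝ) 1) (hmem : memH V α β s ψ) :
    thetaMin V α β ψ ≤ s :=
  csInf_le ⟨0, fun _ hx => hx.1.1⟩ ⟨hIcc, hmem⟩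

/-- Passing feasible upper-bound witnesses to the limit. -/
lemma lim_feas {V : Finset (Fin d → ℤ)} (hV : V.Nonempty) (α β : (Fin d → ℤ) → ℝ)
    (ψk : ℕ → (Fin d → ℝ) → ℝ) (ψ : (Fin d → ℝ) → ℝ)
    (θv : ℕ → (Fin d → ℤ) → ℝ) (sk : ℕ → ℝ) (s : ℝ)
    (hIcc : ∀ n, ∀ ξ ∈ V, θv n ξ ∈ Set.Icc (0:ℝ) 1)
    (havg : ∀ n, (∑ ξ ∈ V, θv n ξ) / (V.card : ℝ) = sk n)
    (hub : ∀ n ν, ψk n ν ≤ ∑ ξ ∈ V, (θv n ξ * β ξ + (1 - θv n ξ) * α ξ) * |dotZ ν ξ|)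
    (hs : Filter.Tendsto sk Filter.atTop (nhds s))
    (hpt : ∀ ν, Filter.Tendsto (fun n => ψk n ν) Filter.atTop (nhds (ψ ν))) :
    ∃ θ : (Fin d → ℤ) → ℝ, (∀ ξ ∈ V, θ ξ ∈ Set.Icc (0:ℝ) 1) ∧
      (∑ ξ ∈ V, θ ξ) / (V.card : ℝ) = s ∧
      ∀ ν, ψ ν ≤ ∑ ξ ∈ V, (θ ξ * β ξ + (1 - θ ξ) * α ξ) * |dotZ ν ξ| := by
  classical
  set X := ({x // x ∈ V} → ℝ)
  set xk : ℕ → X := fun n j => θv n (j : Fin d → ℤ) with hxk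
  have hxkmem : ∀ n, xk n ∈ Set.pi Set.univ (fun _ : {x // x ∈ V} => Set.Icc (0:ℝ) 1) := by
    intro n j _
    exact hIcc n (j : Fin d → ℤ) j.2
  obtain ⟨L, hL, g, hgmono, hgconv⟩ :=
    (isCompact_univ_pi (fun _ : {x // x ∈ V} => isCompact_Icc)).tendsto_subseq hxkmem
  have hcoord : ∀ j : {x // x ∈ V},
      Filter.Tendsto (fun n => θv (g n) (j : Fin d → ℤ)) Filter.atTop (nhds (L j)) := by
    intro j
    exact (tendsto_pi_nhds.1 hgconv) j
  set θ : (Fin d → ℤ) → ℝ := fun ξ => if h : ξ ∈ V then L ⟨ξ, h⟩ else 0 with hθ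
  have hθIcc : ∀ ξ ∈ V, θ ξ ∈ Set.Icc (0:ℝ) 1 := by
    intro ξ hξ
    simp only [hθ, dif_pos hξ]
    exact hL ⟨ξ, hξ⟩ (Set.mem_univ _)
  have hsumconv : Filter.Tendsto (fun n => ∑ ξ ∈ V, θv (g n) ξ) Filter.atTop
      (nhds (∑ ξ ∈ V, θ ξ)) := by
    have h1 : ∀ m, ∑ ξ ∈ V, θv m ξ = ∑ j ∈ V.attach, θv m (j : Fin d → ℤ) :=
      fun m => (Finset.sum_attach V (θv m)).symm
    have h2 : ∑ ξ ∈ V, θ ξ = ∑ j ∈ V.attach, L j := by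
      rw [← Finset.sum_attach V θ]
      exact Finset.sum_congr rfl fun j _ => by simp [hθ, dif_pos j.2]
    simp only [h1, h2]
    exact tendsto_finset_sum _ (fun j _ => hcoord j)
  have hcard : (0:ℝ) < (V.card : ℝ) := by exact_mod_cast Finset.card_pos.2 hV
  have hskconv : Filter.Tendsto (fun n => sk (g n)) Filter.atTop (nhds s) :=
    hs.comp hgmono.tendsto_atTop
  have hsumconv' : Filter.Tendsto (fun n => ∑ ξ ∈ V, θv (g n) ξ) Filter.atTop
      (nhds (s * V.card)) := by
    have : (fun n => ∑ ξ ∈ V, θv (g n) ξ) = fun n => sk (g n) * V.card := by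
      funext n
      have := havg (g n)
      field_simp at this
      linarith [this]
    rw [this]
    exact hskconv.mul_const _
  have hsumeq : ∑ ξ ∈ V, θ ξ = s * V.card := tendsto_nhds_unique hsumconv hsumconv'
  refine ⟨θ, hθIcc, by rw [hsumeq]; field_simp, ?_⟩
  intro ν
  have h1 : Filter.Tendsto (fun n => ψk (g n) ν) Filter.atTop (nhds (ψ ν)) :=
    (hpt ν).comp hgmono.tendsto_atTop
  have h2 : Filter.Tendsto
      (fun n => ∑ ξ ∈ V, (θv (g n) ξ * β ξ + (1 - θv (g n) ξ) * α ξ) * |dotZ ν ξ|)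
      Filter.atTop (nhds (∑ ξ ∈ V, (θ ξ * β ξ + (1 - θ ξ) * α ξ) * |dotZ ν ξ|)) := by
    have h3 : ∀ m, ∑ ξ ∈ V, (θv m ξ * β ξ + (1 - θv m ξ) * α ξ) * |dotZ ν ξ|
        = ∑ j ∈ V.attach, (θv m (j:Fin d → ℤ) * β (j:Fin d → ℤ)
            + (1 - θv m (j:Fin d → ℤ)) * α (j:Fin d → ℤ)) * |dotZ ν (j:Fin d → ℤ)| :=
      fun m => (Finset.sum_attach V _).symm
    have h4 : ∑ ξ ∈ V, (θ ξ * β ξ + (1 - θ ξ) * α ξ) * |dotZ ν ξ|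
        = ∑ j ∈ V.attach, (L j * β (j:Fin d → ℤ)
            + (1 - L j) * α (j:Fin d → ℤ)) * |dotZ ν (j:Fin d → ℤ)| := by
      rw [← Finset.sum_attach V (fun ξ => (θ ξ * β ξ + (1 - θ ξ) * α ξ) * |dotZ ν ξ|)]
      exact Finset.sum_congr rfl fun j _ => by simp [hθ, dif_pos j.2]
    simp only [h3, h4]
    apply tendsto_finset_sum
    intro j _
    exact (((hcoord j).mul_const _).add
      ((tendsto_const_nhds.sub (hcoord j)).mul_const _)).mul_const _
  exact le_of_tendsto_of_tendsto' h1 h2 (fun n => hub (g n) ν)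

/-- The minimum defining `thetaMin` is attained. -/
lemma thetaMin_spec {V : Finset (Fin d → ℤ)} (hV : V.Nonempty) (α β : (Fin d → ℤ) → ℝ)
    {ψ : (Fin d → ℝ) → ℝ} (hψ : memH V α β 1 ψ) :
    thetaMin V α β ψ ∈ Set.Icc (0:ℝ) 1 ∧ memH V α β (thetaMin V α β ψ) ψ := by
  classical
  set SS := {s : ℝ | s ∈ Set.Icc (0:ℝ) 1 ∧ memH V α β s ψ} with hSS
  have hne : SS.Nonempty := ⟨1, ⟨zero_le_one, le_rfl⟩, hψ⟩
  have hbdd : BddBelow SS := ⟨0, fun _ hx => hx.1.1⟩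
  have hclosed : IsClosed SS := by
    apply IsSeqClosed.isClosed
    intro sk s hk hks
    have h0 : ∀ n, 0 ≤ sk n := fun n => (hk n).1.1
    have h1 : ∀ n, sk n ≤ 1 := fun n => (hk n).1.2
    have hIcc : s ∈ Set.Icc (0:ℝ) 1 :=
      ⟨ge_of_tendsto hks (Filter.Eventually.of_forall h0),
        le_of_tendsto hks (Filter.Eventually.of_forall h1)⟩
    choose θv hIccv havgv hbv using fun n => ((hk n).2).2.2.2
    obtain ⟨θ, hθIcc, hθavg, hθub⟩ := lim_feas hV α β (fun _ => ψ) ψ θv sk s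
      hIccv havgv (fun n ν => (hbv n ν).2) hks (fun ν => tendsto_const_nhds)
    exact ⟨hIcc, hψ.1, hψ.2.1, hψ.2.2.1, θ, hθIcc, hθavg,
      fun ν => ⟨memH_lower hψ ν, hθub ν⟩⟩
  have := hclosed.csInf_mem hne hbdd
  exact ⟨this.1, this.2⟩

/-- Extend uniform closeness on the sphere to a global bound by homogeneity. -/
lemma close_ext {f g : (Fin d → ℝ) → ℝ} {δ : ℝ}
    (homf : ∀ t : ℝ, 0 ≤ t → ∀ ν, f (t • ν) = t * f ν)
    (homg : ∀ t : ℝ, 0 ≤ t → ∀ ν, g (t • ν) = t * g ν)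
    (h : ∀ ν : Fin d → ℝ, (∑ k, (ν k)^2) = 1 → |f ν - g ν| < δ) :
    ∀ w : Fin d → ℝ, |f w - g w| ≤ δ * Real.sqrt (∑ k, (w k)^2) := by
  intro w
  set r : ℝ := Real.sqrt (∑ k, (w k)^2) with hr
  have hsumnn : 0 ≤ ∑ k, (w k)^2 := Finset.sum_nonneg fun k _ => sq_nonneg _
  have hrnn : 0 ≤ r := Real.sqrt_nonneg _
  by_cases hr0 : r = 0
  · have hsum0 : ∑ k, (w k)^2 = 0 := by
      have := Real.sqrt_eq_zero'.1 hr0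
      linarith [this]
    have hw0 : w = 0 := by
      funext k
      have := (Finset.sum_eq_zero_iff_of_nonneg (fun k _ => sq_nonneg (w k))).1 hsum0 k
        (Finset.mem_univ k)
      exact pow_eq_zero_iff (two_ne_zero) |>.1 this
    rw [hw0, hom_zero homf, hom_zero homg, hr0]
    simp
  · have hrpos : 0 < r := lt_of_le_of_ne hrnn (Ne.symm hr0)
    set u : Fin d → ℝ := r⁻¹ • w with hu
    have hrsq : r^2 = ∑ k, (w k)^2 := Real.sq_sqrt hsumnn
    have husum : ∑ k, (u k)^2 = 1 := by
      have : ∀ k, (u k)^2 = r⁻¹^2 * (w k)^2 := by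
        intro k
        simp [hu, mul_pow]
      rw [Finset.sum_congr rfl (fun k _ => this k), ← Finset.mul_sum, ← hrsq]
      field_simp
    have hwu : w = r • u := (smul_inv_smul₀ hr0 w).symm
    have h1 : f w = r * f u := by rw [hwu]; exact homf r hrnn u
    have h2 : g w = r * g u := by rw [hwu]; exact homg r hrnn u
    rw [h1, h2, ← mul_sub, abs_mul, abs_of_nonneg hrnn, mul_comm]
    exact mul_le_mul_of_nonneg_right (h u husum).le hrnn

/-- Uniform convergence on the sphere gives pointwise convergence everywhere. -/
lemma tendsto_pointwise {φ : (Fin d → ℝ) → ℝ} {φn : ℕ → (Fin d → ℝ) → ℝ}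
    (homφ : ∀ t : ℝ, 0 ≤ t → ∀ ν, φ (t • ν) = t * φ ν)
    (homn : ∀ n, ∀ t : ℝ, 0 ≤ t → ∀ ν, φn n (t • ν) = t * φn n ν)
    (hconv : ∀ δ : ℝ, 0 < δ → ∃ N : ℕ, ∀ n ≥ N,
        ∀ ν : Fin d → ℝ, (∑ k, (ν k) ^ 2) = 1 → |φn n ν - φ ν| < δ) :
    ∀ ν, Filter.Tendsto (fun n => φn n ν) Filter.atTop (nhds (φ ν)) := by
  intro ν
  rw [Metric.tendsto_atTop]
  intro ε hε
  set r : ℝ := Real.sqrt (∑ k, (ν k)^2) with hrdef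
  have hrnn : 0 ≤ r := Real.sqrt_nonneg _
  obtain ⟨N, hN⟩ := hconv (ε / (r + 1)) (by positivity)
  refine ⟨N, fun n hn => ?_⟩
  rw [Real.dist_eq]
  have := close_ext (homn n) homφ (hN n hn) ν
  calc |φn n ν - φ ν| ≤ ε / (r + 1) * r := this
    _ < ε := by
        rw [div_mul_eq_mul_div, div_lt_iff₀ (by positivity)]
        nlinarith

/-- Lower semicontinuity. -/
lemma lsc_aux {V : Finset (Fin d → ℤ)} (hV : V.Nonempty) (α β : (Fin d → ℤ) → ℝ)
    {φ : (Fin d → ℝ) → ℝ} {φn : ℕ → (Fin d → ℝ) → ℝ}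
    (hφ : memH V α β 1 φ) (hφn : ∀ n, memH V α β 1 (φn n))
    (hpt : ∀ ν, Filter.Tendsto (fun n => φn n ν) Filter.atTop (nhds (φ ν))) :
    ∀ ε : ℝ, 0 < ε → ∀ᶠ n in Filter.atTop,
      thetaMin V α β φ - ε < thetaMin V α β (φn n) := by
  intro ε hε
  by_contra hcon
  have hfreq : ∃ᶠ n in Filter.atTop, thetaMin V α β (φn n) ≤ thetaMin V α β φ - ε := by
    have := Filter.not_eventually.1 hcon
    apply this.mono
    intro n hn
    exact not_lt.1 hn
  obtain ⟨g, hgmono, hgP⟩ := Filter.extraction_of_frequently_atTop hfreq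
  set sk : ℕ → ℝ := fun k => thetaMin V α β (φn (g k)) with hsk
  have hspec : ∀ k, sk k ∈ Set.Icc (0:ℝ) 1 ∧ memH V α β (sk k) (φn (g k)) :=
    fun k => thetaMin_spec hV α β (hφn (g k))
  obtain ⟨sLim, hsLim, g2, hg2mono, hg2conv⟩ :=
    isCompact_Icc.tendsto_subseq (x := sk) (fun k => (hspec k).1)
  choose θv hIccv havgv hbv using fun k => ((hspec (g2 k)).2).2.2.2
  obtain ⟨θ, hθIcc, hθavg, hθub⟩ := lim_feas hV α β (fun k => φn (g (g2 k))) φ θv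
    (fun k => sk (g2 k)) sLim hIccv havgv (fun k ν => (hbv k ν).2) hg2conv
    (fun ν => (hpt ν).comp ((hgmono.comp hg2mono).tendsto_atTop))
  have hmem : memH V α β sLim φ :=
    ⟨hφ.1, hφ.2.1, hφ.2.2.1, θ, hθIcc, hθavg, fun ν => ⟨memH_lower hφ ν, hθub ν⟩⟩
  have h1 : thetaMin V α β φ ≤ sLim := thetaMin_le hsLim hmem
  have h2 : sLim ≤ thetaMin V α β φ - ε :=
    le_of_tendsto hg2conv (Filter.Eventually.of_forall fun k => hgP (g2 k))
  linarith

set_option maxHeartbeats 1000000 in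
/-- Upper semicontinuity. -/
lemma usc_aux {V : Finset (Fin d → ℤ)} (hV : V.Nonempty) {α β : (Fin d → ℤ) → ℝ}
    (hαβ : ∀ ξ ∈ V, 0 < α ξ ∧ α ξ < β ξ)
    {φ : (Fin d → ℝ) → ℝ} {φn : ℕ → (Fin d → ℝ) → ℝ}
    (hφ : memH V α β 1 φ) (hφn : ∀ n, memH V α β 1 (φn n))
    (hconv : ∀ δ : ℝ, 0 < δ → ∃ N : ℕ, ∀ n ≥ N,
        ∀ ν : Fin d → ℝ, (∑ k, (ν k) ^ 2) = 1 → |φn n ν - φ ν| < δ) :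
    ∀ ε : ℝ, 0 < ε → ∃ N, ∀ n ≥ N,
      thetaMin V α β (φn n) ≤ thetaMin V α β φ + ε := by
  intro ε hε
  classical
  obtain ⟨hTIcc, hTmem⟩ := thetaMin_spec hV α β hφ
  set T := thetaMin V α β φ with hT
  obtain ⟨θs, hsIcc, hsavg, hsb⟩ := hTmem.2.2.2
  set s := min ε 1 with hs
  have hspos : 0 < s := lt_min hε one_pos
  have hs1 : s ≤ 1 := min_le_right _ _
  have hsε : s ≤ ε := min_le_left _ _
  have hcard : (0:ℝ) < (V.card:ℝ) := by exact_mod_cast Finset.card_pos.2 hV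
  set P : Finset (Fin d → ℤ) := V.filter (fun ξ => θs ξ < 1) with hP
  by_cases hPne : P.Nonempty
  · -- main case
    have hPV : P ⊆ V := Finset.filter_subset _ _
    set m : ℝ := P.inf' hPne (fun ξ => (1 - θs ξ) * (β ξ - α ξ)) with hm
    have hmpos : 0 < m := by
      rw [hm, Finset.lt_inf'_iff]
      intro ξ hξ
      have h1 := (Finset.mem_filter.1 hξ).2
      have h2 := (hαβ ξ (hPV hξ)).2
      nlinarith
    obtain ⟨C, hC, hkey⟩ := key_decomp (vecZ (d := d)) P (V \ P)
    set δ : ℝ := s * m / (C + 1) with hδ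
    have hδpos : 0 < δ := by positivity
    obtain ⟨N, hN⟩ := hconv δ hδpos
    refine ⟨N, fun n hn => ?_⟩
    set θt : (Fin d → ℤ) → ℝ := fun ξ => θs ξ + s * (1 - θs ξ) with hθt
    have hθtIcc : ∀ ξ ∈ V, θt ξ ∈ Set.Icc (0:ℝ) 1 := by
      intro ξ hξ
      obtain ⟨h0, h1⟩ := hsIcc ξ hξ
      constructor
      · show 0 ≤ θs ξ + s * (1 - θs ξ)
        nlinarith
      · show θs ξ + s * (1 - θs ξ) ≤ 1
        nlinarith
    set A : ℝ := (∑ ξ ∈ V, θt ξ) / (V.card : ℝ) with hA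
    have hsum2 : ∑ ξ ∈ V, θs ξ = T * V.card := by
      rw [← hsavg]; field_simp
    have hAval : A = T + s * (1 - T) := by
      rw [hA]
      have h1 : ∑ ξ ∈ V, θt ξ = ∑ ξ ∈ V, θs ξ + s * ((V.card:ℝ) - ∑ ξ ∈ V, θs ξ) := by
        simp only [hθt]
        rw [Finset.sum_add_distrib, ← Finset.mul_sum, Finset.sum_sub_distrib,
          Finset.sum_const, nsmul_eq_mul, mul_one]
      rw [h1, hsum2]
      field_simp
    have hAIcc : A ∈ Set.Icc (0:ℝ) 1 := by
      rw [hAval]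
      obtain ⟨h0, h1⟩ := hTIcc
      constructor
      · nlinarith
      · nlinarith
    have hAle : A ≤ T + ε := by
      rw [hAval]
      obtain ⟨h0, h1⟩ := hTIcc
      nlinarith
    have hclose : ∀ w : Fin d → ℝ, |φn n w - φ w| ≤ δ * Real.sqrt (∑ k, (w k)^2) :=
      close_ext (hφn n).2.2.1 hφ.2.2.1 (hN n hn)
    have hub : ∀ ν : Fin d → ℝ,
        φn n ν ≤ ∑ ξ ∈ V, (θt ξ * β ξ + (1 - θt ξ) * α ξ) * |dotZ ν ξ| := by
      intro ν0
      set ν : EuclideanSpace ℝ (Fin d) := WithLp.toLp 2 ν0 with hν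
      rw [show ν0 = (ν : Fin d → ℝ) from rfl]
      obtain ⟨y, hyP, hyS, hynorm⟩ := hkey ν
      have hyP' : ∀ ξ ∈ P, dotZ y ξ = 0 := fun ξ hξ => by
        rw [dotZ_inner]; exact hyP ξ hξ
      have hyS' : ∀ ξ ∈ V \ P, |dotZ y ξ| + |dotZ (ν - y) ξ| = |dotZ ν ξ| := by
        intro ξ hξ
        rw [dotZ_inner y, dotZ_inner (ν - y), dotZ_inner ν]
        exact hyS ξ hξ
      set g : ℝ := ∑ ξ ∈ P, |dotZ ν ξ| with hg
      have hgnn : 0 ≤ g := Finset.sum_nonneg fun ξ _ => abs_nonneg _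
      have hPg : ∑ i ∈ P, |⟪ν, vecZ i⟫| = g := by
        rw [hg]
        exact Finset.sum_congr rfl fun ξ _ => by rw [dotZ_inner]
      have hwnorm : Real.sqrt (∑ k, ((ν - y) k)^2) ≤ C * g := by
        rw [sqrt_sum_sq (ν - y)]
        calc ‖ν - y‖ ≤ C * ∑ i ∈ P, |⟪ν, vecZ i⟫| := hynorm
          _ = C * g := by rw [hPg]
      have hsub : φn n ν ≤ φn n y + φn n (ν - y) := by
        have h1 : y + (ν - y) = ν := by abel
        calc φn n ν = φn n (y + (ν - y)) := by congr 1; abel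
          _ ≤ _ := hom_subadd (hφn n).2.1 (hφn n).2.2.1 y (ν - y)
      have hy_ub : φn n y ≤ ∑ ξ ∈ V, β ξ * |dotZ y ξ| := memH_one_upper hV (hφn n) y
      have hw_ub : φn n (ν - y)
          ≤ ∑ ξ ∈ V, (θs ξ * β ξ + (1 - θs ξ) * α ξ) * |dotZ (ν - y) ξ| + δ * (C * g) := by
        have h1 := hclose (ν - y)
        have h2 := (hsb (ν - y)).2
        have h3 : δ * Real.sqrt (∑ k, ((ν - y) k)^2) ≤ δ * (C * g) :=
          mul_le_mul_of_nonneg_left hwnorm hδpos.le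
        have h4 := (le_abs_self (φn n (ν - y) - φ (ν - y))).trans h1
        simp only [WithLp.ofLp_sub] at *
        linarith
      have hsplit : ∀ f : (Fin d → ℤ) → ℝ,
          ∑ ξ ∈ V, f ξ = ∑ ξ ∈ P, f ξ + ∑ ξ ∈ V \ P, f ξ := by
        intro f
        rw [hP, ← Finset.filter_not]
        exact (Finset.sum_filter_add_sum_filter_not V _ f).symm
      have hcs1 : ∀ ξ ∈ V \ P, θs ξ = 1 := by
        intro ξ hξ
        have h1 := Finset.mem_sdiff.1 hξ
        have h2 : ¬ θs ξ < 1 := fun h => h1.2 (Finset.mem_filter.2 ⟨h1.1, h⟩)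
        exact le_antisymm (hsIcc ξ h1.1).2 (not_lt.1 h2)
      set S1 : ℝ := ∑ ξ ∈ V \ P, β ξ * |dotZ y ξ| with hS1
      set S2 : ℝ := ∑ ξ ∈ P, (θs ξ * β ξ + (1 - θs ξ) * α ξ) * |dotZ ν ξ| with hS2
      set S3 : ℝ := ∑ ξ ∈ V \ P, β ξ * |dotZ (ν - y) ξ| with hS3
      set S4 : ℝ := ∑ ξ ∈ P, (s * ((1 - θs ξ) * (β ξ - α ξ))) * |dotZ ν ξ| with hS4
      have hterm1 : ∑ ξ ∈ V, β ξ * |dotZ y ξ| = S1 := by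
        rw [hsplit (fun ξ => β ξ * |dotZ y ξ|), hS1]
        rw [Finset.sum_eq_zero (fun ξ hξ => by rw [hyP' ξ hξ]; simp), zero_add]
      have hterm2 : ∑ ξ ∈ V, (θs ξ * β ξ + (1 - θs ξ) * α ξ) * |dotZ (ν - y) ξ|
          = S2 + S3 := by
        rw [hsplit (fun ξ => (θs ξ * β ξ + (1 - θs ξ) * α ξ) * |dotZ (ν - y) ξ|), hS2, hS3]
        congr 1
        · apply Finset.sum_congr rfl
          intro ξ hξ
          rw [WithLp.ofLp_sub, dotZ_sub, hyP' ξ hξ, sub_zero]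
        · apply Finset.sum_congr rfl
          intro ξ hξ
          rw [hcs1 ξ hξ]; ring
      have htarget : ∑ ξ ∈ V, (θt ξ * β ξ + (1 - θt ξ) * α ξ) * |dotZ ν ξ|
          = (S2 + S4) + (S1 + S3) := by
        rw [hsplit (fun ξ => (θt ξ * β ξ + (1 - θt ξ) * α ξ) * |dotZ ν ξ|)]
        congr 1
        · rw [hS2, hS4, ← Finset.sum_add_distrib]
          apply Finset.sum_congr rfl
          intro ξ _
          show (θt ξ * β ξ + (1 - θt ξ) * α ξ) * |dotZ ν ξ| = _
          have : θt ξ = θs ξ + s * (1 - θs ξ) := rfl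
          rw [this]; ring
        · rw [hS1, hS3, ← Finset.sum_add_distrib]
          apply Finset.sum_congr rfl
          intro ξ hξ
          have h1 : θt ξ = 1 := by
            show θs ξ + s * (1 - θs ξ) = 1
            rw [hcs1 ξ hξ]; ring
          rw [h1, ← hyS' ξ hξ]; ring
      have hgap : δ * (C * g) ≤ S4 := by
        have h1 : ∀ ξ ∈ P, s * m * |dotZ ν ξ| ≤ (s * ((1 - θs ξ) * (β ξ - α ξ))) * |dotZ ν ξ| := by
          intro ξ hξ
          have h2 : m ≤ (1 - θs ξ) * (β ξ - α ξ) :=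
            Finset.inf'_le (fun ξ => (1 - θs ξ) * (β ξ - α ξ)) hξ
          have habs := abs_nonneg (dotZ ν ξ)
          exact mul_le_mul_of_nonneg_right (mul_le_mul_of_nonneg_left h2 hspos.le) habs
        have h2 : s * m * g ≤ S4 := by
          rw [hg, Finset.mul_sum, hS4]
          exact Finset.sum_le_sum h1
        have h3 : δ * (C + 1) = s * m := by
          rw [hδ]; field_simp
        have h4 : δ * C ≤ s * m := by nlinarith [hδpos.le]
        have h5 : δ * (C * g) ≤ s * m * g := by
          calc δ * (C * g) = δ * C * g := by ring
            _ ≤ s * m * g := mul_le_mul_of_nonneg_right h4 hgnn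
        linarith
      rw [htarget]
      rw [hterm1] at hy_ub
      rw [hterm2] at hw_ub
      linarith
    have hmem : memH V α β A (φn n) :=
      ⟨(hφn n).1, (hφn n).2.1, (hφn n).2.2.1, θt, hθtIcc, rfl,
        fun ν => ⟨memH_lower (hφn n) ν, hub ν⟩⟩
    exact (thetaMin_le hAIcc hmem).trans hAle
  · -- degenerate case: T = 1
    have hall : ∀ ξ ∈ V, θs ξ = 1 := by
      intro ξ hξ
      by_contra hne
      have hlt : θs ξ < 1 := lt_of_le_of_ne (hsIcc ξ hξ).2 hne
      exact hPne ⟨ξ, Finset.mem_filter.2 ⟨hξ, hlt⟩⟩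
    have hT1 : T = 1 := by
      rw [← hsavg, Finset.sum_congr rfl hall, Finset.sum_const, nsmul_eq_mul, mul_one]
      field_simp
    refine ⟨0, fun n _ => ?_⟩
    have h1 := thetaMin_le ⟨zero_le_one, le_rfl⟩ (hφn n)
    rw [← hT, hT1] at *
    linarith

end MainAux

/-- If `φₙ, φ ∈ H_{α,β,V}(1)` and `φₙ → φ` uniformly on the unit
sphere, then `θ_{φₙ} → θ_φ`. -/
theorem thetaMin_continuous {d : ℕ} (V : Finset (Fin d → ℤ)) (hV : V.Nonempty)
    (α β : (Fin d → ℤ) → ℝ) (hαβ : ∀ ξ ∈ V, 0 < α ξ ∧ α ξ < β ξ)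
    (φ : (Fin d → ℝ) → ℝ) (φn : ℕ → (Fin d → ℝ) → ℝ)
    (hφ : memH V α β 1 φ) (hφn : ∀ n, memH V α β 1 (φn n))
    (hconv : ∀ δ : ℝ, 0 < δ → ∃ N : ℕ, ∀ n ≥ N,
        ∀ ν : Fin d → ℝ, (∑ k, (ν k) ^ 2) = 1 → |φn n ν - φ ν| < δ) :
    Filter.Tendsto (fun n => thetaMin V α β (φn n)) Filter.atTop
      (nhds (thetaMin V α β φ)) := by
  have hpt := tendsto_pointwise hφ.2.2.1 (fun n => (hφn n).2.2.1) hconv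
  rw [Metric.tendsto_atTop]
  intro ε hε
  obtain ⟨N1, hN1⟩ := usc_aux hV hαβ hφ hφn hconv (ε/2) (by linarith)
  obtain ⟨N2, hN2⟩ := Filter.eventually_atTop.1 (lsc_aux hV α β hφ hφn hpt (ε/2) (by linarith))
  refine ⟨max N1 N2, fun n hn => ?_⟩
  have h1 := hN1 n (le_trans (le_max_left _ _) hn)
  have h2 := hN2 n (le_trans (le_max_right _ _) hn)
  rw [Real.dist_eq, abs_sub_lt_iff]
  constructor <;> linarith
end

section
/- Let $u\in\mathcal{PC}_\varepsilon(\mathbb{R}^d)$ (piecewise constant on the lattice $\varepsilon\mathbb{Z}^d$) be such that $u-\langle\nu,x\rangle$ is 1-periodic, and let $c^\varepsilon_{i,\xi}$ be $(1/\varepsilon)$-periodic nonnegative coefficients. For $\eta=1/M$ with $M\in\mathbb{N}$, define $\tilde u\in\mathcal{PC}_{\varepsilon\eta}(\mathbb{R}^d)$ by $\tilde u(z)=\eta\,u(z/\eta)$. Then $\tilde u-\langle\nu,x\rangle$ is 1-periodic and $\sum_{\xi\in V}\sum_{i\in([-1/2,1/2)^d)_{\varepsilon\eta}}(\varepsilon\eta)^{d-1}c^\varepsilon_{i,\xi}|\tilde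 u_{\varepsilon\eta i}-\tilde u_{\varepsilon\eta(i+\xi)}|\le\sum_{\xi\in V}\sum_{i\in([-1/2,1/2)^d)_\varepsilon}\varepsilon^{d-1}c^\varepsilon_{i,\xi}|u_{\varepsilon i}-u_{\varepsilon(i+\xi)}|$. -/
open Finset
open scoped Classical

/-- The lattice points `i ∈ ℤ^d` with `i/N ∈ [-1/2, 1/2)^d`, i.e. `-N ≤ 2 i_k < N`. -/
noncomputable def cellZ (d N : ℕ) : Finset (Fin d → ℤ) :=
  (Fintype.piFinset fun _ : Fin d => Finset.Ico (-(N : ℤ)) (N : ℤ)).filter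
    (fun i => ∀ k, -(N : ℤ) ≤ 2 * i k ∧ 2 * i k < (N : ℤ))

/-- The discrete 1-homogeneous cell energy at scale `ε = 1/N`:
`∑_{ξ ∈ V} ∑_{i ∈ ([-1/2,1/2)^d)_ε} ε^{d-1} c_{i,ξ} |u_{εi} - u_{ε(i+ξ)}|`,
where `u i` denotes the value of the lattice function at the point `i/N`. -/
noncomputable def cellEnergy {d : ℕ} (V : Finset (Fin d → ℤ)) (N : ℕ)
    (c : (Fin d → ℤ) → (Fin d → ℤ) → ℝ) (u : (Fin d → ℤ) → ℝ) : ℝ :=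
  ∑ ξ ∈ V, ∑ i ∈ cellZ d N, ((1 : ℝ) / N) ^ (d - 1) * c i ξ * |u i - u (i + ξ)|

lemma mem_cellZ {d : ℕ} (K : ℕ) (i : Fin d → ℤ) :
    i ∈ cellZ d K ↔ ∀ k, -((K:ℤ)/2) ≤ i k ∧ i k < -((K:ℤ)/2) + K := by
  simp only [cellZ, Finset.mem_filter, Fintype.mem_piFinset, Finset.mem_Ico]
  constructor
  · rintro ⟨h1, h2⟩ k
    have := h1 k; have := h2 k; omega
  · intro h
    exact ⟨fun k => by have := h k; omega, fun k => by have := h k; omega⟩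

lemma periodB {d : ℕ} (f : (Fin d → ℤ) → ℝ) (n : ℤ)
    (hf : ∀ i k, f (i + n • Pi.single k 1) = f i) :
    ∀ (t : ℤ) (i : Fin d → ℤ) (k : Fin d), f (i + (n * t) • Pi.single k 1) = f i := by
  intro t
  induction t using Int.induction_on with
  | zero => intro i k; simp
  | succ t ih =>
      intro i k
      have hs : (n * ((t:ℤ) + 1)) • (Pi.single k 1 : Fin d → ℤ)
          = (n * t) • Pi.single k 1 + n • Pi.single k 1 := by
        rw [← add_smul]; congr 1; ring
      rw [hs, ← add_assoc, hf, ih]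
  | pred t ih =>
      intro i k
      have hs : (n * (-(t:ℤ) - 1)) • (Pi.single k 1 : Fin d → ℤ) + n • Pi.single k 1
          = (n * (-(t:ℤ))) • Pi.single k 1 := by
        rw [← add_smul]; congr 1; ring
      have h3 := hf (i + (n * (-(t:ℤ) - 1)) • Pi.single k 1) k
      rw [add_assoc, hs] at h3
      rw [← h3]; exact ih i k

lemma periodC {d : ℕ} (f : (Fin d → ℤ) → ℝ) (n : ℤ)
    (hf : ∀ i k, f (i + n • Pi.single k 1) = f i)
    (q i : Fin d → ℤ) : f (fun k => i k + n * q k) = f i := by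
  have key : ∀ s : Finset (Fin d), ∀ i : Fin d → ℤ,
      f (fun k => i k + if k ∈ s then n * q k else 0) = f i := by
    intro s
    induction s using Finset.induction_on with
    | empty => intro i; simp
    | @insert a s ha ih =>
        intro i
        have hstep : ∀ j : Fin d → ℤ,
            f (fun k => j k + if k = a then n * q a else 0) = f j := by
          intro j
          have hj : (fun k => j k + if k = a then n * q a else 0)
              = j + (n * q a) • Pi.single a (1:ℤ) := by
            funext k
            by_cases hk : k = a <;> simp [hk, Pi.single_apply]
          rw [hj]
          exact periodB f n hf (q a) j a
        have he : (fun k => i k + if k ∈ insert a s then n * q k else 0)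
            = fun k => (i k + if k = a then n * q a else 0) + if k ∈ s then n * q k else 0 := by
          funext k
          by_cases hk : k = a
          · subst hk; simp [ha]
          · simp [hk]
        rw [he, ih (fun k => i k + if k = a then n * q a else 0), hstep]
  have := key Finset.univ i
  simpa using this

lemma coord1 {n m : ℤ} (hn : 0 < n) (hm : 0 < m) (L B x : ℤ)
    (h1 : B ≤ x) (h2 : x < B + n * m) :
    B + (L + (x - L) % n + n * (((x - L) % (n * m)) / n) - B) % (n * m) = x := by
  have hP : 0 < n * m := mul_pos hn hm
  have e1 : (x - L) % n = ((x - L) % (n * m)) % n :=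
    (Int.emod_emod_of_dvd _ (dvd_mul_right n m)).symm
  have e2 : L + (x - L) % n + n * (((x - L) % (n * m)) / n) - B
      = L + (x - L) % (n * m) - B := by
    rw [e1]
    have := Int.emod_add_mul_ediv ((x - L) % (n * m)) n
    linarith
  have e3 : (x - L) % (n * m) = (x - L) + (n * m) * (-((x - L) / (n * m))) := by
    have := Int.emod_def (x - L) (n * m); linarith
  have e4 : L + (x - L) % (n * m) - B = (x - B) + (n * m) * (-((x - L) / (n * m))) := by
    rw [e3]; ring
  rw [e2, e4, Int.add_mul_emod_self_left,
    Int.emod_eq_of_lt (by linarith) (by linarith)]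
  ring

lemma coord2 {n m : ℤ} (hn : 0 < n) (hm : 0 < m) (L B q r : ℤ)
    (hq1 : 0 ≤ q) (hq2 : q < m) (hr1 : L ≤ r) (hr2 : r < L + n) :
    (((B + (r + n * q - B) % (n * m)) - L) % (n * m)) / n = q ∧
    L + ((B + (r + n * q - B) % (n * m)) - L) % n = r := by
  have hP : 0 < n * m := mul_pos hn hm
  have e1 : (r + n * q - B) % (n * m)
      = (r + n * q - B) + (n * m) * (-((r + n * q - B) / (n * m))) := by
    have := Int.emod_def (r + n * q - B) (n * m); linarith
  have e2 : (B + (r + n * q - B) % (n * m)) - L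
      = (r - L + n * q) + (n * m) * (-((r + n * q - B) / (n * m))) := by
    rw [e1]; ring
  have hb1 : 0 ≤ r - L + n * q := add_nonneg (by linarith) (mul_nonneg hn.le hq1)
  have hnq : n * q ≤ n * m - n := by nlinarith
  have hb2 : r - L + n * q < n * m := by linarith
  constructor
  · rw [e2, Int.add_mul_emod_self_left, Int.emod_eq_of_lt hb1 hb2,
      Int.add_mul_ediv_left _ _ hn.ne',
      Int.ediv_eq_zero_of_lt (by linarith) (by linarith)]
    simp
  · have e3 : (r - L + n * q) + (n * m) * (-((r + n * q - B) / (n * m)))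
        = (r - L) + n * (q + m * (-((r + n * q - B) / (n * m)))) := by ring
    rw [e2, e3, Int.add_mul_emod_self_left,
      Int.emod_eq_of_lt (by linarith) (by linarith)]
    ring

lemma sum_cell_periodic (d N M : ℕ) (hN : 0 < N) (hM : 0 < M)
    (f : (Fin d → ℤ) → ℝ)
    (hf : ∀ i k, f (i + (N:ℤ) • Pi.single k 1) = f i) :
    ∑ i ∈ cellZ d (N * M), f i = (M:ℝ) ^ d * ∑ i ∈ cellZ d N, f i := by
  have hn : (0:ℤ) < (N:ℤ) := by exact_mod_cast hN
  have hm : (0:ℤ) < (M:ℤ) := by exact_mod_cast hM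
  have hP : (0:ℤ) < (N:ℤ) * (M:ℤ) := mul_pos hn hm
  have hcast : ((N * M : ℕ) : ℤ) = (N:ℤ) * (M:ℤ) := by push_cast; ring
  have hmemNM : ∀ i : Fin d → ℤ, i ∈ cellZ d (N * M) ↔
      ∀ k, -(((N:ℤ) * M) / 2) ≤ i k ∧ i k < -(((N:ℤ) * M) / 2) + (N:ℤ) * M := by
    intro i; rw [mem_cellZ]; rw [hcast]
  have hmemN : ∀ i : Fin d → ℤ, i ∈ cellZ d N ↔
      ∀ k, -((N:ℤ) / 2) ≤ i k ∧ i k < -((N:ℤ) / 2) + (N:ℤ) := mem_cellZ N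
  set L : ℤ := -((N:ℤ) / 2) with hL
  set B : ℤ := -(((N:ℤ) * M) / 2) with hB
  have h1 : ∑ i ∈ cellZ d (N * M), f i
      = ∑ p ∈ ((Fintype.piFinset fun _ : Fin d => Finset.Ico (0:ℤ) (M:ℤ)) ×ˢ cellZ d N),
          f p.2 := by
    refine Finset.sum_nbij'
      (fun i => (fun k => ((i k - L) % ((N:ℤ) * M)) / (N:ℤ), fun k => L + (i k - L) % (N:ℤ)))
      (fun p => fun k => B + (p.2 k + (N:ℤ) * p.1 k - B) % ((N:ℤ) * M)) ?_ ?_ ?_ ?_ ?_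
    · intro i hi
      rw [Finset.mem_product]
      constructor
      · rw [Fintype.mem_piFinset]
        intro k
        rw [Finset.mem_Ico]
        dsimp only
        refine ⟨Int.ediv_nonneg (Int.emod_nonneg _ hP.ne') hn.le, ?_⟩
        rw [Int.ediv_lt_iff_lt_mul hn]
        have := Int.emod_lt_of_pos (i k - L) hP
        linarith
      · rw [hmemN]
        intro k
        dsimp only
        have := Int.emod_nonneg (i k - L) hn.ne'
        have := Int.emod_lt_of_pos (i k - L) hn
        omega
    · intro p hp
      rw [hmemNM]
      intro k
      have := Int.emod_nonneg (p.2 k + (N:ℤ) * p.1 k - B) hP.ne'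
      have := Int.emod_lt_of_pos (p.2 k + (N:ℤ) * p.1 k - B) hP
      omega
    · intro i hi
      funext k
      dsimp only
      have hb := (hmemNM i).1 hi k
      exact coord1 hn hm L B (i k) hb.1 (by omega)
    · intro p hp
      rw [Finset.mem_product, Fintype.mem_piFinset] at hp
      obtain ⟨hq, hr⟩ := hp
      have hr' := (hmemN p.2).1 hr
      have hq' : ∀ k, 0 ≤ p.1 k ∧ p.1 k < (M:ℤ) := by
        intro k; have := hq k; rw [Finset.mem_Ico] at this; exact this
      refine Prod.ext ?_ ?_ <;> funext k <;> dsimp only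
      · exact (coord2 hn hm L B (p.1 k) (p.2 k) (hq' k).1 (hq' k).2 (hr' k).1 (hr' k).2).1
      · exact (coord2 hn hm L B (p.1 k) (p.2 k) (hq' k).1 (hq' k).2 (hr' k).1 (hr' k).2).2
    · intro i hi
      show f i = f (fun k => L + (i k - L) % (N:ℤ))
      have heq : (fun k => (fun k' => L + (i k' - L) % (N:ℤ)) k + (N:ℤ) * ((i k - L) / (N:ℤ))) = i := by
        funext k
        dsimp only
        have := Int.emod_add_mul_ediv (i k - L) (N:ℤ)
        linarith
      have hC := periodC f (N:ℤ) hf (fun k => (i k - L) / (N:ℤ)) (fun k => L + (i k - L) % (N:ℤ))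
      rw [heq] at hC
      exact hC
  rw [h1, Finset.sum_product]
  dsimp only
  rw [Finset.sum_const, Fintype.card_piFinset]
  simp only [Int.card_Ico, sub_zero, Int.toNat_natCast, Finset.prod_const, Finset.card_univ,
    Fintype.card_fin, nsmul_eq_mul]
  push_cast
  ring

/-- Let `u ∈ PC_ε(ℝ^d)`, `ε = 1/N`, with `u - ⟨ν,x⟩` 1-periodic, and
let the coefficients `c_{i,ξ} ≥ 0` be `(1/ε) = N`-periodic. For `η = 1/M`, the rescaled
configuration `ũ(z) = η u(z/η)` (i.e. `ũ_j = η u_j` as a lattice function at scale `εη`)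
satisfies: `ũ - ⟨ν,x⟩` is 1-periodic at scale `εη`, and its `εη`-cell energy does not
exceed the `ε`-cell energy of `u`. -/
theorem rescaled_cell_energy_le {d : ℕ} (V : Finset (Fin d → ℤ))
    (N M : ℕ) (hN : 0 < N) (hM : 0 < M)
    (c : (Fin d → ℤ) → (Fin d → ℤ) → ℝ) (hc : ∀ i ξ, 0 ≤ c i ξ)
    (hper : ∀ (i ξ : Fin d → ℤ) (k : Fin d),
      c (i + (N : ℤ) • Pi.single k 1) ξ = c i ξ)
    (ν : Fin d → ℝ) (u : (Fin d → ℤ) → ℝ)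
    (huper : ∀ (i : Fin d → ℤ) (k : Fin d),
      u (i + (N : ℤ) • Pi.single k 1) = u i + ν k) :
    (∀ (i : Fin d → ℤ) (k : Fin d),
      ((1 : ℝ) / M) * u (i + ((N * M : ℕ) : ℤ) • Pi.single k 1) =
        (1 : ℝ) / M * u i + ν k) ∧
    cellEnergy V (N * M) c (fun i => ((1 : ℝ) / M) * u i) ≤
      cellEnergy V N c u := by
  have hM0 : ((M:ℝ)) ≠ 0 := Nat.cast_ne_zero.mpr hM.ne'
  have hN0 : ((N:ℝ)) ≠ 0 := Nat.cast_ne_zero.mpr hN.ne'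
  constructor
  · intro i k
    have key : ∀ (M' : ℕ) (i : Fin d → ℤ),
        u (i + ((N * M' : ℕ) : ℤ) • Pi.single k 1) = u i + M' * ν k := by
      intro M'
      induction M' with
      | zero => intro i; simp
      | succ M' ih =>
          intro i
          have hc1 : ((N * (M' + 1) : ℕ) : ℤ) = ((N * M' : ℕ) : ℤ) + (N:ℤ) := by
            push_cast; ring
          have hsm : ((N * (M' + 1) : ℕ) : ℤ) • (Pi.single k 1 : Fin d → ℤ)
              = ((N * M' : ℕ) : ℤ) • Pi.single k 1 + (N:ℤ) • Pi.single k 1 := by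
            rw [hc1, add_smul]
          rw [hsm, ← add_assoc, huper, ih]
          push_cast; ring
    rw [key M i]
    field_simp
  · unfold cellEnergy
    refine Finset.sum_le_sum fun ξ _ => ?_
    set f : (Fin d → ℤ) → ℝ := fun i => c i ξ * |u i - u (i + ξ)| with hfdef
    have hfper : ∀ i k, f (i + (N:ℤ) • Pi.single k 1) = f i := by
      intro i k
      have h1 : (i + (N:ℤ) • Pi.single k 1) + ξ = (i + ξ) + (N:ℤ) • Pi.single k 1 :=
        add_right_comm i _ ξ
      simp only [hfdef]
      rw [hper, h1, huper, huper]
      congr 1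
      congr 1
      ring
    have hsum := sum_cell_periodic d N M hN hM f hfper
    have hS : 0 ≤ ∑ i ∈ cellZ d N, f i :=
      Finset.sum_nonneg fun i _ => mul_nonneg (hc i ξ) (abs_nonneg _)
    have hMpos : (0:ℝ) < M := by positivity
    calc ∑ i ∈ cellZ d (N * M),
          ((1:ℝ) / ((N * M : ℕ):ℝ)) ^ (d - 1) * c i ξ *
            |(1:ℝ) / M * u i - (1:ℝ) / M * u (i + ξ)|
        = ∑ i ∈ cellZ d (N * M), ((1:ℝ) / ((N * M : ℕ):ℝ)) ^ (d - 1) * (1 / M) * f i := by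
          refine Finset.sum_congr rfl fun i _ => ?_
          have habs : |(1:ℝ) / M * u i - (1:ℝ) / M * u (i + ξ)|
              = (1 / M) * |u i - u (i + ξ)| := by
            rw [show (1:ℝ) / M * u i - (1:ℝ) / M * u (i + ξ)
                = (1 / M) * (u i - u (i + ξ)) by ring, abs_mul,
              abs_of_pos (show (0:ℝ) < 1 / M by positivity)]
          rw [habs]; simp only [hfdef]; ring
      _ = ((1:ℝ) / ((N * M : ℕ):ℝ)) ^ (d - 1) * (1 / M) * ∑ i ∈ cellZ d (N * M), f i := by
          rw [Finset.mul_sum]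
      _ = (((1:ℝ) / ((N * M : ℕ):ℝ)) ^ (d - 1) * (1 / M) * (M:ℝ) ^ d) * ∑ i ∈ cellZ d N, f i := by
          rw [hsum]; ring
      _ ≤ ((1:ℝ) / N) ^ (d - 1) * ∑ i ∈ cellZ d N, f i := by
          refine mul_le_mul_of_nonneg_right ?_ hS
          have hcast : ((N * M : ℕ):ℝ) = (N:ℝ) * (M:ℝ) := by push_cast; ring
          rw [hcast]
          cases d with
          | zero =>
              simp only [Nat.zero_sub, pow_zero, one_mul, mul_one]
              have h1 : (1:ℝ) ≤ M := by exact_mod_cast hM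
              rw [one_div]
              simpa using inv_le_one_of_one_le₀ h1
          | succ e =>
              have : ((1:ℝ) / ((N:ℝ) * M)) ^ (e + 1 - 1) * (1 / M) * (M:ℝ) ^ (e + 1)
                  = ((1:ℝ) / N) ^ (e + 1 - 1) := by
                simp only [Nat.add_sub_cancel]
                field_simp
                have hMe : (M:ℝ) ^ e * (M:ℝ)⁻¹ ^ e = 1 := by rw [← mul_pow, mul_inv_cancel₀ hM0, one_pow]
                linear_combination ((M:ℝ) * (N:ℝ)⁻¹ ^ e) * hMe
              rw [this]
      _ = ∑ i ∈ cellZ d N, ((1:ℝ) / N) ^ (d - 1) * c i ξ * |u i - u (i + ξ)| := by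
          rw [Finset.mul_sum]
          exact Finset.sum_congr rfl fun i _ => by simp only [hfdef]; ring
end
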